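/- Let 0 < γ < 1. Then the infinite series ∑_{k=0}^{∞} l_k^{2,γ} converges to 0. -/

import Mathlib

/-- Grünwald–Letnikov coefficient `g_k^α = (-1)^k * binom(α,k)`. -/
noncomputable def gl (a : ℝ) (k : ℕ) : ℝ :=
  (-1 : ℝ) ^ k * (∏ j ∈ Finset.range k, (a - j)) / (Nat.factorial k : ℝ)

/-- Shifted Grünwald weights. -/
noncomputable def glw (a : ℝ) : ℕ → ℝ
  | 0 => a / 2 * gl a 0
  | (k+1) => a / 2 * gl a (k+1) + (2 - a) / 2 * gl a k

/-- Second-order Lubich coefficients `l_m^{2,γ}`. -/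
noncomputable def lub2 (g : ℝ) (m : ℕ) : ℝ :=
  (3/2 : ℝ) ^ g * ∑ k ∈ Finset.range (m+1), (1/3 : ℝ) ^ k * gl g k * gl g (m - k)

/-- The Toeplitz matrix `B_α` of size `(M-1) × (M-1)`. -/
noncomputable def Bmat (a : ℝ) (M : ℕ) : Matrix (Fin (M-1)) (Fin (M-1)) ℝ :=
  fun i j => if (j : ℕ) ≤ (i : ℕ) + 1 then glw a ((i : ℕ) + 1 - (j : ℕ)) else 0

/-- The symmetric matrix `A_α = B_α + B_αᵀ`. -/
noncomputable def Amat (a : ℝ) (M : ℕ) : Matrix (Fin (M-1)) (Fin (M-1)) ℝ :=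
  Bmat a M + (Bmat a M).transpose

section aux
variable (γ : ℝ)

noncomputable def pprod (n : ℕ) : ℝ := ∏ j ∈ Finset.range n, (1 - γ/(j+1))

lemma gl_zero : gl γ 0 = 1 := by simp [gl]

lemma gl_succ (k : ℕ) : gl γ (k+1) = gl γ k * ((k - γ)/(k+1)) := by
  have h1 : ((k+1).factorial : ℝ) = (k+1) * k.factorial := by
    push_cast [Nat.factorial_succ]; ring
  have hk : ((k:ℝ)+1) ≠ 0 := by positivity
  have hf : (k.factorial : ℝ) ≠ 0 := by positivity
  simp only [gl, Finset.prod_range_succ, h1, pow_succ]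
  field_simp
  ring

lemma gl_succ_eq (hγ0 : 0 < γ) (n : ℕ) :
    gl γ (n+1) = -(γ/(n+1)) * pprod γ n := by
  induction n with
  | zero => simp [gl_succ, gl_zero, pprod]
  | succ n ih =>
    rw [gl_succ, ih]
    simp only [pprod, Finset.prod_range_succ]
    have h1 : ((n:ℝ)+1) ≠ 0 := by positivity
    have h2 : ((n:ℝ)+1+1) ≠ 0 := by positivity
    push_cast
    field_simp

lemma sum_gl (hγ0 : 0 < γ) (n : ℕ) :
    ∑ k ∈ Finset.range (n+1), gl γ k = pprod γ n := by
  induction n with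
  | zero => simp [gl_zero, pprod]
  | succ n ih =>
    rw [Finset.sum_range_succ, ih, gl_succ_eq γ hγ0]
    simp only [pprod, Finset.prod_range_succ]
    ring

lemma pprod_pos (hγ1 : γ < 1) (n : ℕ) : 0 < pprod γ n := by
  apply Finset.prod_pos
  intro j _
  have hj : (0:ℝ) ≤ j := j.cast_nonneg
  have : γ/(j+1) < 1 := by
    rw [div_lt_one (by positivity)]
    linarith
  linarith

lemma pprod_tendsto (hγ0 : 0 < γ) (hγ1 : γ < 1) :
    Filter.Tendsto (pprod γ) Filter.atTop (nhds 0) := by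
  have hle : ∀ n, pprod γ n ≤ Real.exp (-γ * ∑ j ∈ Finset.range n, (1:ℝ)/(j+1)) := by
    intro n
    calc pprod γ n ≤ ∏ j ∈ Finset.range n, Real.exp (-(γ/(j+1))) := by
          apply Finset.prod_le_prod
          · intro j _
            have hj : (0:ℝ) ≤ j := j.cast_nonneg
            have : γ/(j+1) < 1 := by
              rw [div_lt_one (by positivity)]
              linarith
            linarith
          · intro j _
            have := Real.add_one_le_exp (-(γ/(j+1)))
            linarith
      _ = Real.exp (∑ j ∈ Finset.range n, -(γ/(j+1))) := (Real.exp_sum _ _).symm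
      _ = Real.exp (-γ * ∑ j ∈ Finset.range n, (1:ℝ)/(j+1)) := by
          congr 1
          rw [Finset.mul_sum]
          apply Finset.sum_congr rfl
          intro j _
          ring
  have hH : Filter.Tendsto (fun n => ∑ j ∈ Finset.range n, (1:ℝ)/(j+1)) Filter.atTop Filter.atTop := by
    have := Real.tendsto_sum_range_one_div_nat_succ_atTop
    convert this using 2 with n
  have hbot : Filter.Tendsto (fun n => -γ * ∑ j ∈ Finset.range n, (1:ℝ)/(j+1)) Filter.atTop Filter.atBot := by
    apply Filter.Tendsto.const_mul_atTop_of_neg (by linarith) hH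
  have hexp : Filter.Tendsto (fun n => Real.exp (-γ * ∑ j ∈ Finset.range n, (1:ℝ)/(j+1))) Filter.atTop (nhds 0) :=
    Real.tendsto_exp_atBot.comp hbot
  apply tendsto_of_tendsto_of_tendsto_of_le_of_le tendsto_const_nhds hexp
  · intro n; exact (pprod_pos γ hγ1 n).le
  · exact hle

lemma summable_abs_gl (hγ0 : 0 < γ) (hγ1 : γ < 1) : Summable (fun k => |gl γ k|) := by
  apply summable_of_sum_range_le (c := 2) (fun n => abs_nonneg _)
  intro n
  match n with
  | 0 => norm_num
  | (m+1) =>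
    rw [Finset.sum_range_succ']
    have h1 : ∀ k ∈ Finset.range m, |gl γ (k+1)| = -(gl γ (k+1)) := by
      intro k _
      rw [abs_of_nonpos]
      rw [gl_succ_eq γ hγ0]
      have := pprod_pos γ hγ1 k
      have : 0 ≤ γ/(k+1) * pprod γ k := by positivity
      nlinarith
    rw [Finset.sum_congr rfl h1, Finset.sum_neg_distrib]
    have h2 : ∑ k ∈ Finset.range m, gl γ (k+1) = pprod γ m - 1 := by
      have := sum_gl γ hγ0 m
      rw [Finset.sum_range_succ'] at this
      rw [gl_zero] at this
      linarith
    rw [h2, gl_zero, abs_of_nonneg (by norm_num : (0:ℝ) ≤ 1)]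
    have := pprod_pos γ hγ1 m
    linarith

lemma hasSum_gl (hγ0 : 0 < γ) (hγ1 : γ < 1) : HasSum (gl γ) 0 := by
  have hs : Summable (gl γ) := (summable_abs_gl γ hγ0 hγ1).of_abs
  rw [hs.hasSum_iff_tendsto_nat]
  rw [← Filter.tendsto_add_atTop_iff_nat 1]
  have : (fun n => ∑ i ∈ Finset.range (n+1), gl γ i) = pprod γ := by
    funext n; exact sum_gl γ hγ0 n
  rw [this]
  exact pprod_tendsto γ hγ0 hγ1

end aux

theorem stmt10 (γ : ℝ) (hγ0 : 0 < γ) (hγ1 : γ < 1) :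
    HasSum (lub2 γ) 0 := by
  set a : ℕ → ℝ := fun k => (1/3:ℝ)^k * gl γ k with ha
  have hna : Summable (fun k => ‖a k‖) := by
    apply Summable.of_nonneg_of_le (fun k => norm_nonneg _) _ (summable_abs_gl γ hγ0 hγ1)
    intro k
    simp only [ha, Real.norm_eq_abs, abs_mul]
    have h1 : |((1:ℝ)/3)^k| ≤ 1 := by
      rw [abs_of_nonneg (by positivity)]
      exact pow_le_one₀ (by norm_num) (by norm_num)
    nlinarith [abs_nonneg (gl γ k), abs_nonneg (((1:ℝ)/3)^k)]
  have hnb : Summable (fun k => ‖gl γ k‖) := by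
    simpa [Real.norm_eq_abs] using summable_abs_gl γ hγ0 hγ1
  have hcauchy := hasSum_sum_range_mul_of_summable_norm hna hnb
  have hb0 : ∑' n, gl γ n = 0 := (hasSum_gl γ hγ0 hγ1).tsum_eq
  rw [hb0, mul_zero] at hcauchy
  have := hcauchy.mul_left ((3/2:ℝ)^γ)
  rw [mul_zero] at this
  have heq : lub2 γ = fun m => (3/2:ℝ)^γ * ∑ k ∈ Finset.range (m+1), a k * gl γ (m-k) := by
    funext m
    simp only [lub2, ha]
  rw [heq]
  exact this
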